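/- Let L, M be positive integers, let Σ ∈ ℂ^{L×L} be a Hermitian positive definite matrix, let p ∈ ℂ^L, Ỹ ∈ ℂ^{L×M}, and let h̄ ∈ ℂ^M satisfy Σ_{m=1}^M |h̄_m|² = M. Let g > 0, κ > 0 and set γ = g/(1+κ), μ = √(gκ/(1+κ)). Define the real numbers α = γ·p^H Σ^{-1} p, β = (γ/M)·p^H Σ^{-1} Ỹ Ỹ^H Σ^{-1} p, and η = (2μ/M)·Re(h̄^T Ỹ^H Σ^{-1} p). Then for every real d with 1 + αd > 0, the matrix Σ + dγ p p^H is Hermitian positive definite and [log det(Σ + dγ p p^H) + (1/M)·tr((Σ + dγ p p^H)^{-1} (Ỹ − dμ p h̄^T)(Ỹ − dμ p h̄^T)^H)] − [log det(Σ) + (1/M)·tr(Σ^{-1} Ỹ Ỹ^H)] = log(1 + αd) + (καd² − (β+η)d)/(1 + αd), where both determinants are positive reals and all traces appearing are real. -/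

import Mathlib

open Matrix
open scoped ComplexOrder

set_option linter.unusedSectionVars false
set_option maxHeartbeats 1000000

section Aux
variable {n m k : Type*} [Fintype n] [Fintype m] [Fintype k] [DecidableEq n] [DecidableEq m]

lemma myVecMulVec_mulVec (u : n → ℂ) (v : m → ℂ) (x : m → ℂ) :
    vecMulVec u v *ᵥ x = (v ⬝ᵥ x) • u := by
  ext i
  simp [vecMulVec_apply, mulVec, dotProduct, Finset.sum_mul, Finset.mul_sum, mul_comm,
    mul_left_comm]

lemma myVecMul_vecMulVec (v : n → ℂ) (u : n → ℂ) (w : m → ℂ) :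
    v ᵥ* vecMulVec u w = (v ⬝ᵥ u) • w := by
  ext j
  simp [vecMulVec_apply, vecMul, dotProduct, Finset.sum_mul, mul_assoc]

lemma myTrace_mul_vecMulVec (X : Matrix n m ℂ) (u : m → ℂ) (v : n → ℂ) :
    Matrix.trace (X * vecMulVec u v) = v ⬝ᵥ X *ᵥ u := by
  simp only [Matrix.trace, Matrix.diag_apply, mul_apply, vecMulVec_apply, dotProduct, mulVec,
    Finset.mul_sum]
  apply Finset.sum_congr rfl
  intro i _
  apply Finset.sum_congr rfl
  intro j _
  ring

lemma myTrace_vecMulVec_mul (u : n → ℂ) (v : m → ℂ) (Z : Matrix m n ℂ) :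
    Matrix.trace (vecMulVec u v * Z) = v ⬝ᵥ Z *ᵥ u := by
  rw [Matrix.trace_mul_comm, myTrace_mul_vecMulVec]

lemma myMul_vecMulVec (X : Matrix n m ℂ) (u : m → ℂ) (v : k → ℂ) :
    X * vecMulVec u v = vecMulVec (X *ᵥ u) v := by
  ext i j
  simp [mul_apply, vecMulVec_apply, mulVec, dotProduct, Finset.sum_mul, mul_assoc]

lemma myVecMulVec_mul (u : n → ℂ) (v : m → ℂ) (Z : Matrix m k ℂ) :
    vecMulVec u v * Z = vecMulVec u (v ᵥ* Z) := by
  ext i j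
  simp [mul_apply, vecMulVec_apply, vecMul, dotProduct, Finset.mul_sum, mul_assoc]

lemma myConjTranspose_vecMulVec (u : n → ℂ) (v : m → ℂ) :
    (vecMulVec u v)ᴴ = vecMulVec (star v) (star u) := by
  ext i j
  simp [conjTranspose_apply, vecMulVec_apply, mul_comm]

lemma mySmul_vecMulVec (c : ℂ) (u : n → ℂ) (v : m → ℂ) :
    c • vecMulVec u v = vecMulVec (c • u) v := by
  ext i j
  simp [vecMulVec_apply, mul_assoc]

lemma myVecMulVec_smul (c : ℂ) (u : n → ℂ) (v : m → ℂ) :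
    vecMulVec u (c • v) = c • vecMulVec u v := by
  ext i j
  simp [vecMulVec_apply]
  ring

lemma myConjDot (Y : Matrix n m ℂ) (a : n → ℂ) (v : m → ℂ) :
    star a ⬝ᵥ (Y *ᵥ star v) = star (v ⬝ᵥ (Yᴴ *ᵥ a)) := by
  simp only [dotProduct, mulVec, conjTranspose_apply, Finset.mul_sum, star_sum, star_mul',
    Pi.star_apply, star_star]
  rw [Finset.sum_comm]
  apply Finset.sum_congr rfl
  intro i _
  apply Finset.sum_congr rfl
  intro j _
  ring

lemma myTrace_nonneg {N : Matrix n n ℂ} (hN : N.PosSemidef) : 0 ≤ N.trace := by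
  have : ∀ i, 0 ≤ N i i := by
    intro i
    have := hN.dotProduct_mulVec_nonneg (Pi.single i 1)
    simpa [dotProduct, mulVec, Pi.single_apply, Finset.sum_ite_eq, Finset.sum_ite_eq'] using this
  exact Finset.sum_nonneg fun i _ => this i

end Aux

theorem stmt_0 (L M : ℕ) (hL : 0 < L) (hM : 0 < M)
    (A : Matrix (Fin L) (Fin L) ℂ) (hA : A.PosDef)
    (p : Fin L → ℂ) (Y : Matrix (Fin L) (Fin M) ℂ)
    (hbar : Fin M → ℂ) (hhbar : ∑ m, Complex.normSq (hbar m) = (M : ℝ))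
    (g κ : ℝ) (hg : 0 < g) (hκ : 0 < κ)
    (γ μ α β η : ℝ)
    (hγ : γ = g / (1 + κ))
    (hμ : μ = Real.sqrt (g * κ / (1 + κ)))
    (hα : α = γ * (star p ⬝ᵥ A⁻¹ *ᵥ p).re)
    (hβ : β = γ / M * (star p ⬝ᵥ (A⁻¹ * Y * Yᴴ * A⁻¹) *ᵥ p).re)
    (hη : η = 2 * μ / M * (hbar ⬝ᵥ (Yᴴ * A⁻¹) *ᵥ p).re) :
    ∀ d : ℝ, 1 + α * d > 0 →
      let B : Matrix (Fin L) (Fin L) ℂ := A + ((d * γ : ℝ) : ℂ) • vecMulVec p (star p)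
      let W : Matrix (Fin L) (Fin M) ℂ := Y - ((d * μ : ℝ) : ℂ) • vecMulVec p hbar
      B.PosDef ∧
      B.det.im = 0 ∧ 0 < B.det.re ∧
      A.det.im = 0 ∧ 0 < A.det.re ∧
      (Matrix.trace (B⁻¹ * W * Wᴴ)).im = 0 ∧
      (Matrix.trace (A⁻¹ * Y * Yᴴ)).im = 0 ∧
      (Real.log B.det.re + (1 / M) * (Matrix.trace (B⁻¹ * W * Wᴴ)).re) -
          (Real.log A.det.re + (1 / M) * (Matrix.trace (A⁻¹ * Y * Yᴴ)).re)
        = Real.log (1 + α * d) + (κ * α * d ^ 2 - (β + η) * d) / (1 + α * d) := by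
  intro d hd
  intro B W
  -- basic nonvanishing facts
  have hM0 : (M : ℝ) ≠ 0 := Nat.cast_ne_zero.mpr hM.ne'
  have h1αd : (1 : ℝ) + α * d ≠ 0 := ne_of_gt hd
  set c : ℂ := ((d * γ : ℝ) : ℂ) with hc
  set e : ℂ := ((d * μ : ℝ) : ℂ) with he
  set P : Matrix (Fin L) (Fin L) ℂ := vecMulVec p (star p) with hPdef
  have hAinv : (A⁻¹).PosDef := hA.inv
  have hAH : A⁻¹ᴴ = A⁻¹ := hAinv.isHermitian
  set q : Fin L → ℂ := A⁻¹ *ᵥ p with hq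
  have hstarq : star p ᵥ* A⁻¹ = star q := by
    rw [hq, star_mulVec, hAH]
  have hkey : ∀ u : Fin L → ℂ, star p ⬝ᵥ A⁻¹ *ᵥ u = star q ⬝ᵥ u := by
    intro u; rw [dotProduct_mulVec, hstarq]
  set s : ℂ := star p ⬝ᵥ q with hs
  have hs0 : 0 ≤ s := hAinv.posSemidef.dotProduct_mulVec_nonneg p
  set S : ℝ := s.re with hS
  have hsreal : s = (S : ℂ) := by
    have him : s.im = 0 := ((Complex.le_def.mp hs0).2).symm
    apply Complex.ext
    · simp [hS]
    · simp [him]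
  have hS0 : 0 ≤ S := by
    have := (Complex.le_def.mp hs0).1
    simpa using this
  have hαS : α = γ * S := by rw [hα]
  -- determinant of A
  have hdetA : (0 : ℂ) < A.det := hA.det_pos
  have hdetAre : 0 < A.det.re := (Complex.lt_def.mp hdetA).1
  have hdetAim : A.det.im = 0 := ((Complex.lt_def.mp hdetA).2).symm
  have hAU : IsUnit A.det := isUnit_iff_ne_zero.mpr hdetA.ne'
  have hAq : A *ᵥ q = p := by
    rw [hq, mulVec_mulVec, Matrix.mul_nonsing_inv A hAU, one_mulVec]
  -- 1 + c s
  have hcs : 1 + c * s = ((1 + α * d : ℝ) : ℂ) := by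
    rw [hsreal, hc, hαS]; push_cast; ring
  have hcsne : 1 + c * s ≠ 0 := by
    rw [hcs]
    exact_mod_cast Complex.ofReal_ne_zero.mpr h1αd
  have hqp : star q ⬝ᵥ p = (S : ℂ) := by
    rw [star_dotProduct q p, ← hs, hsreal, Complex.star_def, Complex.conj_ofReal]
  have hpq : star p ⬝ᵥ q = (S : ℂ) := by rw [← hs, hsreal]
  -- determinant of B
  have hdetB : B.det = A.det * ((1 + α * d : ℝ) : ℂ) := by
    have h1 : B = A + replicateCol Unit (c • p) * replicateRow Unit (star p) := by
      show A + c • P = _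
      rw [hPdef, mySmul_vecMulVec, vecMulVec_eq Unit]
    rw [h1, det_add_replicateCol_mul_replicateRow hAU]
    congr 1
    have h2 : A⁻¹ * replicateCol Unit (c • p) = replicateCol Unit (c • q) := by
      rw [← replicateCol_mulVec, mulVec_smul]
    rw [det_unique, Matrix.add_apply, Matrix.one_apply_eq, Matrix.mul_assoc, h2,
      replicateRow_mul_replicateCol_apply, dotProduct_smul, smul_eq_mul, ← hs, ← hcs]
  have hdetBre : 0 < B.det.re := by
    rw [hdetB]
    simp [Complex.mul_re, Complex.mul_im, hdetAim]
    positivity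
  have hdetBim : B.det.im = 0 := by
    rw [hdetB]
    simp [Complex.mul_im, hdetAim]
  -- Sherman--Morrison
  set f : ℂ := c / (1 + c * s) with hf
  have hfmul : f * (1 + c * s) = c := div_mul_cancel₀ c hcsne
  have hfreal : f = ((d * γ / (1 + α * d) : ℝ) : ℂ) := by
    rw [hf, hcs, hc, Complex.ofReal_div]
  set Q : Matrix (Fin L) (Fin L) ℂ := vecMulVec q (star q) with hQdef
  set C : Matrix (Fin L) (Fin L) ℂ := A⁻¹ - f • Q with hCdef
  have hBC : B * C = 1 := by
    show (A + c • P) * C = 1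
    rw [hCdef, Matrix.add_mul, Matrix.mul_sub, Matrix.mul_smul,
      Matrix.mul_nonsing_inv A hAU, Matrix.smul_mul, Matrix.mul_sub, Matrix.mul_smul]
    have h1 : A * Q = vecMulVec p (star q) := by
      rw [hQdef, myMul_vecMulVec, hAq]
    have h2 : P * A⁻¹ = vecMulVec p (star q) := by
      rw [hPdef, myVecMulVec_mul, hstarq]
    have h3 : P * Q = s • vecMulVec p (star q) := by
      rw [hPdef, hQdef, myVecMulVec_mul, myVecMul_vecMulVec, ← hs, myVecMulVec_smul]
    rw [h1, h2, h3]
    have hV : (1 : Matrix (Fin L) (Fin L) ℂ) - f • vecMulVec p (star q) +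
        c • (vecMulVec p (star q) - f • s • vecMulVec p (star q))
        = 1 + (c - f - c * f * s) • vecMulVec p (star q) := by
      module
    rw [hV, show c - f - c * f * s = 0 by linear_combination -hfmul]
    simp
  have hBinv : B⁻¹ = C := inv_eq_right_inv hBC
  -- Cauchy-Schwarz type bound
  have hCS : ∀ x : Fin L → ℂ, Complex.normSq (star p ⬝ᵥ x) ≤ S * (star x ⬝ᵥ A *ᵥ x).re := by
    intro x
    by_cases hp : p = 0
    · have hare : 0 ≤ (star x ⬝ᵥ A *ᵥ x).re := hA.posSemidef.re_dotProduct_nonneg x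
      simp [hp]
      positivity
    · have hSpos : 0 < S := by
        have h := hAinv.re_dotProduct_pos hp
        simpa using h
      set u : ℂ := star p ⬝ᵥ x with hu
      set a : ℂ := star x ⬝ᵥ A *ᵥ x with ha
      have haim : a.im = 0 := ((Complex.le_def.mp (hA.posSemidef.dotProduct_mulVec_nonneg x)).2).symm
      set y : Fin L → ℂ := (S : ℂ) • x - u • q with hy
      have h0 : 0 ≤ star y ⬝ᵥ A *ᵥ y := hA.posSemidef.dotProduct_mulVec_nonneg y
      have hqAx : star q ⬝ᵥ A *ᵥ x = u := by
        rw [dotProduct_mulVec]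
        have : star q ᵥ* A = star p := by
          conv_lhs => rw [← hA.isHermitian.eq]
          rw [vecMul_conjTranspose, star_star, hAq]
        rw [this, hu]
      have hxp : star x ⬝ᵥ p = star u := by
        rw [star_dotProduct x p, hu]
      have hyy : star y ⬝ᵥ A *ᵥ y = (S : ℂ) * (S : ℂ) * a - (S : ℂ) * (Complex.normSq u : ℂ) := by
        have h1 : A *ᵥ y = (S : ℂ) • (A *ᵥ x) - u • p := by
          rw [hy, mulVec_sub, mulVec_smul, mulVec_smul, hAq]
        have h2 : star y = (S : ℂ) • star x - star u • star q := by
          rw [hy, star_sub, star_smul, star_smul, Complex.star_def, Complex.conj_ofReal]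
        rw [h2, h1]
        simp only [sub_dotProduct, dotProduct_sub, smul_dotProduct, dotProduct_smul,
          smul_eq_mul]
        rw [hqAx, hxp, hqp, ← ha, ← Complex.mul_conj]
        ring_nf
        rw [Complex.star_def]
        ring
      rw [hyy] at h0
      have h0re : 0 ≤ S * S * a.re - S * Complex.normSq u := by
        have := (Complex.le_def.mp h0).1
        simpa [Complex.mul_re, Complex.mul_im, haim] using this
      nlinarith [hSpos]
  -- positive definiteness of B
  have hBpos : B.PosDef := by
    rw [posDef_iff_dotProduct_mulVec]; constructor
    · show Bᴴ = B
      show (A + c • P)ᴴ = A + c • P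
      rw [conjTranspose_add, conjTranspose_smul, hA.isHermitian.eq, hPdef,
        myConjTranspose_vecMulVec, star_star, hc]
      simp [Complex.star_def, Complex.conj_ofReal]
    · intro x hx
      have hax : 0 < star x ⬝ᵥ A *ᵥ x := hA.dotProduct_mulVec_pos hx
      have haim : (star x ⬝ᵥ A *ᵥ x).im = 0 := ((Complex.lt_def.mp hax).2).symm
      have hare : 0 < (star x ⬝ᵥ A *ᵥ x).re := (Complex.lt_def.mp hax).1
      have hBx : star x ⬝ᵥ B *ᵥ x
          = star x ⬝ᵥ A *ᵥ x + c * (Complex.normSq (star p ⬝ᵥ x) : ℂ) := by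
        show star x ⬝ᵥ (A + c • P) *ᵥ x = _
        rw [add_mulVec, dotProduct_add, smul_mulVec, dotProduct_smul, hPdef,
          myVecMulVec_mulVec, dotProduct_smul, smul_eq_mul, smul_eq_mul,
          star_dotProduct x p, Complex.star_def, Complex.mul_conj]
      set u := star p ⬝ᵥ x with hu
      set a := star x ⬝ᵥ A *ᵥ x with ha
      have hval : star x ⬝ᵥ B *ᵥ x = ((a.re + d * γ * Complex.normSq u : ℝ) : ℂ) := by
        rw [hBx, hc]
        apply Complex.ext
        · simp [Complex.mul_re, Complex.add_re]
        · simp [Complex.mul_im, haim]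
      rw [hval]
      rw [Complex.lt_def]
      constructor
      · simp only [Complex.zero_re, Complex.ofReal_re]
        rcases le_or_gt 0 (d * γ) with hdγ | hdγ
        · have := Complex.normSq_nonneg u
          positivity
        · have hcs := hCS x
          have h1 : 1 + d * γ * S > 0 := by
            rw [hαS] at hd
            nlinarith
          nlinarith [Complex.normSq_nonneg u]
      · simp
  -- trace identities
  set V : Matrix (Fin L) (Fin M) ℂ := vecMulVec p hbar with hVdef
  set wv : Fin L → ℂ := Y *ᵥ star hbar with hwv
  set zv : Fin L → ℂ := hbar ᵥ* Yᴴ with hzv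
  set hsc : ℂ := hbar ⬝ᵥ Yᴴ *ᵥ q with hhsc
  set b : ℂ := star q ⬝ᵥ (Y * Yᴴ) *ᵥ q with hb
  set t0 : ℂ := Matrix.trace (A⁻¹ * (Y * Yᴴ)) with ht0
  have hWW : W * Wᴴ = Y * Yᴴ - e • vecMulVec wv (star p) - e • vecMulVec p zv
      + ((M : ℂ) * (e * e)) • P := by
    have hVH : Vᴴ = vecMulVec (star hbar) (star p) := by
      rw [hVdef, myConjTranspose_vecMulVec]
    have h1 : Y * Vᴴ = vecMulVec wv (star p) := by
      rw [hVH, myMul_vecMulVec, hwv]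
    have h2 : V * Yᴴ = vecMulVec p zv := by
      rw [hVdef, myVecMulVec_mul, hzv]
    have h3 : V * Vᴴ = (M : ℂ) • P := by
      rw [hVdef, hVH, myVecMulVec_mul, myVecMul_vecMulVec]
      have : hbar ⬝ᵥ star hbar = (M : ℂ) := by
        have h4 : hbar ⬝ᵥ star hbar = ((∑ m, Complex.normSq (hbar m) : ℝ) : ℂ) := by
          simp [dotProduct, Complex.mul_conj]
        rw [h4, hhbar, Complex.ofReal_natCast]
      rw [this, myVecMulVec_smul, hPdef]
    have hWH : Wᴴ = Yᴴ - e • Vᴴ := by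
      show (Y - e • V)ᴴ = _
      rw [conjTranspose_sub, conjTranspose_smul, he, Complex.star_def, Complex.conj_ofReal]
    show (Y - e • V) * Wᴴ = _
    rw [hWH, Matrix.sub_mul, Matrix.mul_sub, Matrix.mul_sub, Matrix.mul_smul,
      Matrix.smul_mul, Matrix.smul_mul, Matrix.mul_smul, h1, h2, h3]
    module
  -- scalar identifications
  have hw2 : star q ⬝ᵥ wv = star hsc := by
    rw [hwv, hhsc, myConjDot]
  have hw3 : zv ⬝ᵥ q = hsc := by
    rw [hhsc, hzv, ← dotProduct_mulVec]
  have hbPS : 0 ≤ b := (posSemidef_self_mul_conjTranspose Y).dotProduct_mulVec_nonneg q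
  have hbim : b.im = 0 := ((Complex.le_def.mp hbPS).2).symm
  have ht0PS : 0 ≤ t0 := by
    rw [ht0, ← Matrix.mul_assoc, Matrix.trace_mul_comm, ← Matrix.mul_assoc]
    exact myTrace_nonneg ((hAinv.posSemidef).conjTranspose_mul_mul_same Y)
  have ht0im : t0.im = 0 := ((Complex.le_def.mp ht0PS).2).symm
  -- the trace of B⁻¹ W Wᴴ
  have hT : Matrix.trace (B⁻¹ * W * Wᴴ)
      = t0 - e * star hsc - e * hsc + (M : ℂ) * (e * e) * (S : ℂ)
        - f * (b - e * ((S : ℂ) * star hsc) - e * (hsc * (S : ℂ))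
          + (M : ℂ) * (e * e) * ((S : ℂ) * (S : ℂ))) := by
    rw [Matrix.mul_assoc, hBinv, hCdef, Matrix.sub_mul, Matrix.smul_mul, hWW]
    rw [Matrix.trace_sub, Matrix.trace_smul, smul_eq_mul]
    congr 1
    · -- trace (A⁻¹ * Z)
      rw [hPdef, Matrix.mul_add, Matrix.mul_sub, Matrix.mul_sub, Matrix.mul_smul,
        Matrix.mul_smul, Matrix.mul_smul, Matrix.trace_add, Matrix.trace_sub,
        Matrix.trace_sub, Matrix.trace_smul, Matrix.trace_smul, Matrix.trace_smul,
        myTrace_mul_vecMulVec, myTrace_mul_vecMulVec, myTrace_mul_vecMulVec]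
      rw [hkey wv, hw2]
      have h5 : zv ⬝ᵥ A⁻¹ *ᵥ p = hsc := by rw [← hq, hw3]
      rw [h5, hkey p, hqp]
      simp only [smul_eq_mul, ← ht0]
    · -- trace (Q * Z)
      rw [hQdef, myTrace_vecMulVec_mul, hPdef]
      rw [add_mulVec, sub_mulVec, sub_mulVec, smul_mulVec, smul_mulVec,
        smul_mulVec, myVecMulVec_mulVec, myVecMulVec_mulVec, myVecMulVec_mulVec]
      rw [dotProduct_add, dotProduct_sub, dotProduct_sub, dotProduct_smul, dotProduct_smul,
        dotProduct_smul, dotProduct_smul, dotProduct_smul, dotProduct_smul]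
      rw [hpq, hqp, hw2, hw3, ← hb]
      simp only [smul_eq_mul]
  -- real form of the trace
  have hTreal : Matrix.trace (B⁻¹ * W * Wᴴ)
      = ((t0.re - 2 * (d * μ) * hsc.re + M * ((d * μ) * (d * μ)) * S
          - (d * γ / (1 + α * d)) * (b.re - 2 * (d * μ) * S * hsc.re
            + (d * μ) * (d * μ) * M * S * S) : ℝ) : ℂ) := by
    rw [hT, hfreal, he]
    apply Complex.ext
    · simp only [Complex.add_re, Complex.sub_re, Complex.mul_re, Complex.mul_im,
        Complex.ofReal_re, Complex.ofReal_im, Complex.add_im, Complex.sub_im,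
        Complex.natCast_re, Complex.natCast_im, ht0im, hbim, Complex.star_def,
        Complex.conj_re, Complex.conj_im]
      ring
    · simp only [Complex.add_re, Complex.sub_re, Complex.mul_re, Complex.mul_im,
        Complex.ofReal_re, Complex.ofReal_im, Complex.add_im, Complex.sub_im,
        Complex.natCast_re, Complex.natCast_im, ht0im, hbim, Complex.star_def,
        Complex.conj_re, Complex.conj_im]
      ring
  -- matching the statement's scalars
  have hbmatch : star p ⬝ᵥ (A⁻¹ * Y * Yᴴ * A⁻¹) *ᵥ p = b := by
    rw [← mulVec_mulVec, ← hq, Matrix.mul_assoc, ← mulVec_mulVec, hkey, hb]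
  have hηmatch : hbar ⬝ᵥ (Yᴴ * A⁻¹) *ᵥ p = hsc := by
    rw [hhsc, ← mulVec_mulVec, ← hq]
  have hβ2 : β = γ / M * b.re := by rw [hβ, hbmatch]
  have hη2 : η = 2 * μ / M * hsc.re := by rw [hη, hηmatch]
  have hκγ : μ ^ 2 = κ * γ := by
    rw [hμ, Real.sq_sqrt (by positivity), hγ]
    field_simp
  have h1αd' : 1 + γ * S * d ≠ 0 := by rw [hαS] at h1αd; convert h1αd using 2 <;> ring
  have key : (1 / (M : ℝ)) * ((t0.re - 2 * (d * μ) * hsc.re + M * ((d * μ) * (d * μ)) * S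
          - (d * γ / (1 + α * d)) * (b.re - 2 * (d * μ) * S * hsc.re
            + (d * μ) * (d * μ) * M * S * S)) - t0.re)
      = (κ * α * d ^ 2 - (β + η) * d) / (1 + α * d) := by
    rw [hαS, hβ2, hη2]
    rw [show κ * (γ * S) * d ^ 2 = μ ^ 2 * S * d ^ 2 by rw [hκγ]; ring]
    have hne : 1 + γ * S * d ≠ 0 := h1αd'
    have hne2 : 1 + d * S * γ ≠ 0 := by convert hne using 1; ring
    field_simp
    ring
  have hBdre : B.det.re = A.det.re * (1 + α * d) := by
    rw [hdetB]
    simp [Complex.mul_re, hdetAim]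
  have ht0g : (Matrix.trace (A⁻¹ * Y * Yᴴ)) = t0 := by
    rw [Matrix.mul_assoc, ← ht0]
  refine ⟨hBpos, hdetBim, hdetBre, hdetAim, hdetAre, ?_, ?_, ?_⟩
  · rw [hTreal]; exact Complex.ofReal_im _
  · rw [ht0g]; exact ht0im
  · rw [hBdre, Real.log_mul hdetAre.ne' h1αd, hTreal, ht0g]
    simp only [Complex.ofReal_re]
    linarith [key]
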